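/- Let B₁, B₂ be Banach spaces, K : B₁ → B₂ a C¹ map such that DK_u is surjective with closed kernel and closed complementary subspace for all u ∈ K⁻¹(0), and let f : B₁ → ℝ be C¹. Fix u ∈ K⁻¹(0). Then Df_u(v) = 0 for all v ∈ ker DK_u if and only if there exists λ ∈ B₂* with Df_u(v) = ⟨λ, DK_u(v)⟩ for all v ∈ B₁. -/

import Mathlib

/-- Lagrange multiplier theorem on Banach spaces: at a point of the constraint set
`K⁻¹(0)` where `DK` is surjective with closed complemented kernel, `Df` vanishes on
`ker DK` iff there is a multiplier `λ ∈ B₂*` with `Df = λ ∘ DK`. -/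
theorem stmt6 {B₁ B₂ : Type*} [NormedAddCommGroup B₁] [NormedSpace ℝ B₁] [CompleteSpace B₁]
    [NormedAddCommGroup B₂] [NormedSpace ℝ B₂] [CompleteSpace B₂]
    (K : B₁ → B₂) (hK : ContDiff ℝ 1 K)
    (hreg : ∀ u : B₁, K u = 0 → Function.Surjective (fderiv ℝ K u) ∧
      Submodule.ClosedComplemented (LinearMap.ker (fderiv ℝ K u : B₁ →ₗ[ℝ] B₂)))
    (f : B₁ → ℝ) (hf : ContDiff ℝ 1 f)
    (u : B₁) (hu : K u = 0) :
    (∀ v ∈ LinearMap.ker (fderiv ℝ K u : B₁ →ₗ[ℝ] B₂), fderiv ℝ f u v = 0) ↔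
      ∃ lam : B₂ →L[ℝ] ℝ, ∀ v : B₁, fderiv ℝ f u v = lam (fderiv ℝ K u v) := by
  set DK := fderiv ℝ K u with hDK
  set Df := fderiv ℝ f u with hDf
  obtain ⟨hsurj, hcompl⟩ := hreg u hu
  constructor
  · intro hker
    obtain ⟨p, hp⟩ := hcompl
    -- projection onto the kernel
    set p' : B₁ →L[ℝ] B₁ := (LinearMap.ker (DK : B₁ →ₗ[ℝ] B₂)).subtypeL.comp p with hp'
    have hp'mem : ∀ v : B₁, p' v ∈ LinearMap.ker (DK : B₁ →ₗ[ℝ] B₂) := fun v => (p v).2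
    have hp'ker : ∀ v ∈ LinearMap.ker (DK : B₁ →ₗ[ℝ] B₂), p' v = v := by
      intro v hv
      have := hp ⟨v, hv⟩
      simpa [p'] using congrArg Subtype.val this
    -- N : closed complement of the kernel
    set N := LinearMap.ker (p' : B₁ →ₗ[ℝ] B₁) with hN
    haveI : CompleteSpace N := (ContinuousLinearMap.isClosed_ker p').completeSpace_coe
    set g : N →L[ℝ] B₂ := DK.comp N.subtypeL with hg
    have hvN : ∀ v : B₁, v - p' v ∈ N := by
      intro v
      have : p' (p' v) = p' v := hp'ker _ (hp'mem v)
      simp [N, LinearMap.mem_ker, map_sub, this]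
    have hginj : LinearMap.ker (g : N →ₗ[ℝ] B₂) = ⊥ := by
      rw [LinearMap.ker_eq_bot']
      rintro ⟨m, hm⟩ hgm
      have hmker : m ∈ LinearMap.ker (DK : B₁ →ₗ[ℝ] B₂) := by simpa [g] using hgm
      have : p' m = m := hp'ker _ hmker
      have hm0 : m = 0 := by
        have hm' : p' m = 0 := hm
        rw [this] at hm'; exact hm'
      exact Subtype.ext hm0
    have hgsurj : LinearMap.range (g : N →ₗ[ℝ] B₂) = ⊤ := by
      rw [LinearMap.range_eq_top]
      intro w
      obtain ⟨v, hv⟩ := hsurj w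
      refine ⟨⟨v - p' v, hvN v⟩, ?_⟩
      have : DK (v - p' v) = DK v := by
        have h0 : DK (p' v) = 0 := hp'mem v
        simp [map_sub, h0]
      simpa [g, this] using hv
    set e := ContinuousLinearEquiv.ofBijective g hginj hgsurj with he
    refine ⟨Df.comp (N.subtypeL.comp (e.symm : B₂ →L[ℝ] N)), ?_⟩
    intro v
    have hDKv : DK (v - p' v) = DK v := by
      have h0 : DK (p' v) = 0 := hp'mem v
      simp [map_sub, h0]
    have hsymm : e.symm (DK v) = ⟨v - p' v, hvN v⟩ := by
      apply e.injective
      rw [e.apply_symm_apply]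
      have : e ⟨v - p' v, hvN v⟩ = DK (v - p' v) := rfl
      rw [this, hDKv]
    have hDfp : Df (p' v) = 0 := hker _ (hp'mem v)
    simp only [ContinuousLinearMap.comp_apply, Submodule.subtypeL_apply,
      ContinuousLinearEquiv.coe_coe, hsymm]
    simp [map_sub, hDfp]
  · rintro ⟨lam, hlam⟩ v hv
    have : DK v = 0 := hv
    rw [hlam v, this, map_zero]
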